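/- Let p be a prime, n ≥ 1, and let B be a commutative ring that is p-adically complete and separated (i.e., the canonical map B → lim_m B/p^m B is an isomorphism). Then the ring of truncated p-typical Witt vectors of length n, TruncatedWittVector p n B, is also p-adically complete and separated. -/

import Mathlib

section AuxWitt


open Finset

variable {p : ℕ} [hp : Fact p.Prime]

lemma ghost_sum {R : Type*} [CommRing R] (i : ℕ) (x : WittVector p R) :
    WittVector.ghostComponent i x
      = ∑ j ∈ range (i+1), (p:R)^j * x.coeff j ^ p^(i-j) := by
  rw [WittVector.ghostComponent_apply, wittPolynomial_eq_sum_C_mul_X_pow, map_sum]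
  refine Finset.sum_congr rfl fun j _ => ?_
  simp [MvPolynomial.aeval_X, map_mul, map_pow]

lemma pcast_ne_zero {R : Type*} [CommRing R] [CharZero R] : (p:R) ≠ 0 := by
  exact_mod_cast hp.out.ne_zero

lemma U1core {R : Type*} [CommRing R] [IsDomain R] [CharZero R]
    (y c : WittVector p R) (s : ℕ) :
    ∀ i, i ≤ s → (p:R)^(s-i) ∣ (y + (p:WittVector p R)^s * c).coeff i - y.coeff i := by
  set z := y + (p:WittVector p R)^s * c with hz
  intro i
  induction i using Nat.strong_induction_on with
  | _ i IH =>
    intro his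
    have hg : WittVector.ghostComponent i z
        = WittVector.ghostComponent i y + (p:R)^s * WittVector.ghostComponent i c := by
      rw [hz]; push_cast [map_add, map_mul, map_pow, map_natCast]; ring
    rw [ghost_sum, ghost_sum, ghost_sum, Finset.sum_range_succ, Finset.sum_range_succ,
      Nat.sub_self] at hg
    simp only [pow_zero, pow_one] at hg
    have key : (p:R)^s ∣ (p:R)^i * (z.coeff i - y.coeff i) := by
      have heq : (p:R)^i * (z.coeff i - y.coeff i)
          = (p:R)^s * (∑ j ∈ Finset.range (i+1), (p:R)^j * c.coeff j ^ p^(i-j))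
            + ∑ j ∈ Finset.range i,
                ((p:R)^j * y.coeff j ^ p^(i-j) - (p:R)^j * z.coeff j ^ p^(i-j)) := by
        rw [Finset.sum_sub_distrib]
        linear_combination hg
      rw [heq]
      refine dvd_add (Dvd.intro _ rfl) (Finset.dvd_sum fun j hj => ?_)
      rw [Finset.mem_range] at hj
      have hjs : j ≤ s := le_trans (le_of_lt hj) his
      have h1 : (p:R)^(s-j) ∣ y.coeff j ^ p^(i-j) - z.coeff j ^ p^(i-j) := by
        refine dvd_trans ((dvd_sub_comm).mp (IH j hj hjs)) ?_
        exact sub_dvd_pow_sub_pow _ _ _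
      have h2 := mul_dvd_mul_left ((p:R)^j) h1
      rwa [← pow_add, add_comm j, Nat.sub_add_cancel hjs, mul_sub] at h2
    obtain ⟨d, hd⟩ := key
    refine ⟨d, mul_left_cancel₀ (pow_ne_zero i (pcast_ne_zero (p := p))) ?_⟩
    rw [hd, ← mul_assoc, ← pow_add, add_comm i, Nat.sub_add_cancel his]

lemma U1 {C : Type*} [CommRing C] (y c : WittVector p C) (s i : ℕ) (hi : i ≤ s) :
    (p:C)^(s-i) ∣ (y + (p:WittVector p C)^s * c).coeff i - y.coeff i := by
  set R := MvPolynomial (ℕ ⊕ ℕ) ℤ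
  let f : R →+* C :=
    (MvPolynomial.aeval (Sum.elim (fun j => y.coeff j) (fun j => c.coeff j))).toRingHom
  let yU : WittVector p R := WittVector.mk p fun j => MvPolynomial.X (Sum.inl j)
  let cU : WittVector p R := WittVector.mk p fun j => MvPolynomial.X (Sum.inr j)
  have hmy : WittVector.map f yU = y := by
    ext j; rw [WittVector.map_coeff]; show MvPolynomial.aeval _ (MvPolynomial.X _) = _
    rw [MvPolynomial.aeval_X, Sum.elim_inl]
  have hmc : WittVector.map f cU = c := by
    ext j; rw [WittVector.map_coeff]; show MvPolynomial.aeval _ (MvPolynomial.X _) = _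
    rw [MvPolynomial.aeval_X, Sum.elim_inr]
  obtain ⟨d, hd⟩ := U1core yU cU s i hi
  refine ⟨f d, ?_⟩
  have : y + (p:WittVector p C)^s * c = WittVector.map f (yU + (p:WittVector p R)^s * cU) := by
    rw [map_add, map_mul, map_pow, map_natCast, hmy, hmc]
  rw [this, WittVector.map_coeff, ← hmy, WittVector.map_coeff, ← map_sub, hd]
  rw [map_mul, map_pow, map_natCast]

lemma isUnit_p_witt {R : Type*} [CommRing R] [Invertible (p:R)] :
    IsUnit (p : WittVector p R) := by
  have h1 : IsUnit ((p : ℕ → R)) := by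
    refine IsUnit.of_mul_eq_one (fun _ => ⅟(p:R)) ?_
    funext k
    show (p : R) * ⅟(p:R) = 1
    exact mul_invOf_self _
  have h2 := h1.map ((WittVector.ghostEquiv p R).symm : (ℕ → R) →+* WittVector p R)
  rwa [map_natCast] at h2

lemma exp_ineq (m i j : ℕ) (hj : j ≤ i) : m + i + 1 ≤ j + (m+1) * p^(i-j) := by
  have h1 : i - j + 1 ≤ p^(i-j) := Nat.lt_pow_self (n := i-j) hp.out.one_lt
  have h2 : (m+1)*(i-j+1) ≤ (m+1)*p^(i-j) := Nat.mul_le_mul_left _ h1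
  have h3 : (m+1)*(i-j+1) = (m+1)*(i-j) + (m+1) := by ring
  have h4 : i - j ≤ (m+1)*(i-j) := Nat.le_mul_of_pos_left _ (Nat.succ_pos m)
  omega

lemma U2core (m : ℕ) :
    ∃ y : WittVector p (MvPolynomial ℕ ℤ),
      (p:WittVector p (MvPolynomial ℕ ℤ))^m * y
        = WittVector.mk p (fun i => (p:MvPolynomial ℕ ℤ)^(m+1) * MvPolynomial.X i) := by
  set R0 := MvPolynomial ℕ ℤ
  set Rq := MvPolynomial ℕ ℚ with hRq
  set ι : R0 →+* Rq := MvPolynomial.map (Int.castRingHom ℚ) with hι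
  have hιinj : Function.Injective ι := MvPolynomial.map_injective _ Int.cast_injective
  set xU : WittVector p R0 := WittVector.mk p (fun i => (p:R0)^(m+1) * MvPolynomial.X i) with hxU
  set xQ : WittVector p Rq := WittVector.map ι xU with hxQ
  haveI : Invertible (p : Rq) :=
    ((invertibleOfNonzero (by exact_mod_cast hp.out.ne_zero : (p:ℚ) ≠ 0)).map
      (algebraMap ℚ Rq)).copy _ (by rw [map_natCast])
  obtain ⟨u, hu⟩ := isUnit_p_witt (p := p) (R := Rq)
  set yQ : WittVector p Rq := (↑u⁻¹)^m * xQ with hyQ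
  have hx : (p:WittVector p Rq)^m * yQ = xQ := by
    rw [hyQ, ← hu, ← mul_assoc, ← mul_pow, Units.mul_inv, one_pow, one_mul]
  have xcoe : ∀ j, xQ.coeff j = ι ((p:R0)^(m+1) * MvPolynomial.X j) := by
    intro j
    rw [hxQ, WittVector.map_coeff, hxU, WittVector.coeff_mk]
  have main : ∀ i, ∃ c : R0, yQ.coeff i = ι ((p:R0) * c) := by
    intro i
    induction i using Nat.strong_induction_on with
    | _ i IH =>
      have hgi : (p:Rq)^m * WittVector.ghostComponent i yQ
          = WittVector.ghostComponent i xQ := by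
        have := congrArg (WittVector.ghostComponent i) hx
        rwa [map_mul, map_pow, map_natCast] at this
      rw [ghost_sum, ghost_sum] at hgi
      rw [Finset.sum_range_succ (f := fun j => (p:Rq)^j * yQ.coeff j ^ p^(i-j))] at hgi
      simp only [Nat.sub_self, pow_zero, pow_one] at hgi
      -- D1 : ghost of xQ
      have hD1 : ∃ A : R0,
          (∑ j ∈ range (i+1), (p:Rq)^j * xQ.coeff j ^ p^(i-j)) = ι ((p:R0)^(m+i+1) * A) := by
        have hdvd : (p:R0)^(m+i+1) ∣
            ∑ j ∈ range (i+1), (p:R0)^j * ((p:R0)^(m+1) * MvPolynomial.X j) ^ p^(i-j) := by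
          refine Finset.dvd_sum fun j hj => ?_
          rw [Finset.mem_range, Nat.lt_succ_iff] at hj
          have h0 : (p:R0)^(m+i+1) ∣ (p:R0)^(j + (m+1) * p^(i-j)) :=
            pow_dvd_pow _ (exp_ineq m i j hj)
          have heq : (p:R0)^j * ((p:R0)^(m+1) * MvPolynomial.X j) ^ p^(i-j)
              = (p:R0)^(j + (m+1) * p^(i-j)) * (MvPolynomial.X j) ^ p^(i-j) := by
            rw [mul_pow, ← pow_mul, pow_add]; ring
          rw [heq]
          exact h0.mul_right _
        obtain ⟨A, hA⟩ := hdvd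
        refine ⟨A, ?_⟩
        rw [← hA, map_sum]
        refine Finset.sum_congr rfl fun j hj => ?_
        rw [xcoe j]
        simp only [map_mul, map_pow, map_natCast]
      -- D2 : partial ghost sum of yQ
      have hD2 : ∃ B : R0,
          (∑ j ∈ range i, (p:Rq)^j * yQ.coeff j ^ p^(i-j)) = ι ((p:R0)^(i+1) * B) := by
        have hcs : ∀ j ∈ range i, ∃ c : R0, yQ.coeff j = ι ((p:R0) * c) := fun j hj =>
          IH j (Finset.mem_range.mp hj)
        choose cs hcs using hcs
        have hdvd : (p:R0)^(i+1) ∣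
            ∑ j ∈ (range i).attach, (p:R0)^(j:ℕ) * ((p:R0) * cs j j.2) ^ p^(i-(j:ℕ)) := by
          refine Finset.dvd_sum fun j hj => ?_
          have hji : (j:ℕ) < i := Finset.mem_range.mp j.2
          have h0 : (p:R0)^(i+1) ∣ (p:R0)^((j:ℕ) + p^(i-(j:ℕ))) := by
            refine pow_dvd_pow _ ?_
            have h1 : i - (j:ℕ) + 1 ≤ p^(i-(j:ℕ)) := Nat.lt_pow_self hp.out.one_lt
            omega
          have heq : (p:R0)^(j:ℕ) * ((p:R0) * cs j j.2) ^ p^(i-(j:ℕ))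
              = (p:R0)^((j:ℕ) + p^(i-(j:ℕ))) * (cs j j.2) ^ p^(i-(j:ℕ)) := by
            rw [mul_pow, pow_add]; ring
          rw [heq]
          exact h0.mul_right _
        obtain ⟨B, hB⟩ := hdvd
        refine ⟨B, ?_⟩
        rw [← hB, map_sum, ← Finset.sum_attach (range i)
          (fun j => (p:Rq)^j * yQ.coeff j ^ p^(i-j))]
        refine Finset.sum_congr rfl fun j hj => ?_
        rw [hcs j j.2]
        simp only [map_mul, map_pow, map_natCast]
      obtain ⟨A, hA⟩ := hD1
      obtain ⟨B, hB⟩ := hD2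
      refine ⟨A - B, ?_⟩
      have hcancel : (p:Rq)^(m+i) * yQ.coeff i
          = (p:Rq)^(m+i) * ι ((p:R0) * (A - B)) := by
        calc (p:Rq)^(m+i) * yQ.coeff i
            = (p:Rq)^m * ((∑ j ∈ range i, (p:Rq)^j * yQ.coeff j ^ p^(i-j)) + (p:Rq)^i * yQ.coeff i)
              - (p:Rq)^m * (∑ j ∈ range i, (p:Rq)^j * yQ.coeff j ^ p^(i-j)) := by
              rw [pow_add]; ring
          _ = ι ((p:R0)^(m+i+1) * A) - (p:Rq)^m * ι ((p:R0)^(i+1) * B) := by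
              rw [hgi, hA, hB]
          _ = (p:Rq)^(m+i) * ι ((p:R0) * (A - B)) := by
              simp only [map_mul, map_pow, map_natCast, map_sub]
              ring
      exact mul_left_cancel₀ (pow_ne_zero _ (pcast_ne_zero (p := p))) hcancel
  choose cs hcs using main
  refine ⟨WittVector.mk p (fun i => (p:R0) * cs i), ?_⟩
  apply WittVector.map_injective ι hιinj
  rw [map_mul, map_pow, map_natCast]
  have : WittVector.map ι (WittVector.mk p (fun i => (p:R0) * cs i)) = yQ := by
    ext j
    rw [WittVector.map_coeff, WittVector.coeff_mk, ← hcs j]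
  rw [this, hx]




lemma U2 {C : Type*} [CommRing C] (m N : ℕ) (x : WittVector p C)
    (h : ∀ i, i < N → x.coeff i ∈ Ideal.span {(p:C)^(m+1)}) :
    ∃ y : WittVector p C, ∀ i, i < N → ((p:WittVector p C)^m * y).coeff i = x.coeff i := by
  have h' : ∀ i, ∃ c : C, i < N → x.coeff i = (p:C)^(m+1) * c := by
    intro i
    by_cases hi : i < N
    · obtain ⟨c, hc⟩ := Ideal.mem_span_singleton.mp (h i hi)
      exact ⟨c, fun _ => hc⟩
    · exact ⟨0, fun hi' => absurd hi' hi⟩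
  choose cs hcs using h'
  let f : MvPolynomial ℕ ℤ →+* C := (MvPolynomial.aeval cs).toRingHom
  obtain ⟨y0, hy0⟩ := U2core (p := p) m
  refine ⟨WittVector.map f y0, fun i hi => ?_⟩
  have h2 : (p:WittVector p C)^m * WittVector.map f y0
      = WittVector.map f ((p:WittVector p (MvPolynomial ℕ ℤ))^m * y0) := by
    rw [map_mul, map_pow, map_natCast]
  rw [h2, hy0, WittVector.map_coeff, WittVector.coeff_mk]
  show f ((p:MvPolynomial ℕ ℤ)^(m+1) * MvPolynomial.X i) = x.coeff i
  rw [map_mul, map_pow, map_natCast]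
  have : f (MvPolynomial.X i) = cs i := MvPolynomial.aeval_X _ _
  rw [this, ← hcs i hi]

lemma TL1 {C : Type*} [CommRing C] {n : ℕ} (hn : 1 ≤ n)
    (x y : TruncatedWittVector p n C) (k : ℕ)
    (h : x - y ∈ Ideal.span {(p:TruncatedWittVector p n C)^(n*k)}) (i : Fin n) :
    x.coeff i - y.coeff i ∈ Ideal.span {(p:C)^k} := by
  rcases Nat.eq_zero_or_pos k with rfl | hk
  · rw [pow_zero, Ideal.span_singleton_one]
    exact Submodule.mem_top
  obtain ⟨c, hc⟩ := Ideal.mem_span_singleton.mp h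
  obtain ⟨Y, rfl⟩ := WittVector.truncate_surjective (p := p) n C y
  obtain ⟨Cc, hCc⟩ := WittVector.truncate_surjective (p := p) n C c
  have hx : x = WittVector.truncate n (Y + (p:WittVector p C)^(n*k) * Cc) := by
    rw [map_add, map_mul, map_pow, map_natCast, hCc, ← hc]
    ring
  rw [hx, WittVector.coeff_truncate, WittVector.coeff_truncate]
  have hile : (i:ℕ) ≤ n*k := le_trans (le_of_lt i.2) (Nat.le_mul_of_pos_right n hk)
  have hd := U1 (p := p) Y Cc (n*k) i hile
  rw [Ideal.mem_span_singleton]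
  refine dvd_trans (pow_dvd_pow _ ?_) hd
  -- k ≤ n*k - i
  have h6 : n*k = n*(k-1) + n := by
    have h7 : (k-1)+1 = k := Nat.succ_pred_eq_of_pos hk
    nth_rewrite 1 [← h7]
    rw [Nat.mul_add, Nat.mul_one]
  have h8 : k - 1 ≤ n*(k-1) := Nat.le_mul_of_pos_left _ (lt_of_lt_of_le Nat.zero_lt_one hn)
  have h9 : (i:ℕ) < n := i.2
  omega

lemma TL2 {C : Type*} [CommRing C] {n : ℕ} (x y : TruncatedWittVector p n C) (m : ℕ)
    (h : ∀ i : Fin n, x.coeff i - y.coeff i ∈ Ideal.span {(p:C)^(m+1)}) :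
    x - y ∈ Ideal.span {(p:TruncatedWittVector p n C)^m} := by
  obtain ⟨X, rfl⟩ := WittVector.truncate_surjective (p := p) n C x
  obtain ⟨Y, rfl⟩ := WittVector.truncate_surjective (p := p) n C y
  set I : Ideal C := Ideal.span {(p:C)^(m+1)} with hI
  set π : C →+* C ⧸ I := Ideal.Quotient.mk I with hπ
  have hD : ∀ i, i < n → (X - Y).coeff i ∈ I := by
    intro i hi
    have htr : WittVector.truncate (p := p) n (WittVector.map π X)
        = WittVector.truncate n (WittVector.map π Y) := by
      apply TruncatedWittVector.ext
      intro j
      rw [WittVector.coeff_truncate, WittVector.coeff_truncate,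
        WittVector.map_coeff, WittVector.map_coeff]
      have := h j
      rw [WittVector.coeff_truncate, WittVector.coeff_truncate] at this
      rw [hπ]
      exact Ideal.Quotient.eq.mpr this
    have h0 : WittVector.truncate (p := p) n (WittVector.map π (X - Y)) = 0 := by
      rw [map_sub, map_sub, htr, sub_self]
    have h1 : π ((X - Y).coeff i) = 0 := by
      have h2 := congrArg (fun z => TruncatedWittVector.coeff ⟨i, hi⟩ z) h0
      simpa only [WittVector.coeff_truncate, WittVector.map_coeff,
        TruncatedWittVector.coeff_zero] using h2
    exact Ideal.Quotient.eq_zero_iff_mem.mp h1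
  obtain ⟨y0, hy0⟩ := U2 m n (X - Y) (fun i hi => hD i hi)
  rw [Ideal.mem_span_singleton]
  refine ⟨WittVector.truncate n y0, ?_⟩
  have : WittVector.truncate (p := p) n (X - Y)
      = WittVector.truncate n ((p:WittVector p C)^m * y0) := by
    apply TruncatedWittVector.ext
    intro j
    rw [WittVector.coeff_truncate, WittVector.coeff_truncate]
    exact (hy0 j j.2).symm
  rw [← map_sub, this, map_mul, map_pow, map_natCast]

set_option linter.unusedSectionVars false in
lemma smod_iff {R : Type*} [CommRing R] (a b : R) (k : ℕ) :
    a ≡ b [SMOD ((Ideal.span {(p:R)})^k • ⊤ : Submodule R R)] ↔ a - b ∈ Ideal.span {(p:R)^k} := by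
  rw [SModEq.sub_mem, smul_eq_mul, Ideal.mul_top, Ideal.span_singleton_pow]

end AuxWitt


theorem stmt_8 (p : ℕ) [hp : Fact p.Prime] (n : ℕ) (hn : 1 ≤ n)
    {B : Type*} [CommRing B]
    (hB : IsAdicComplete (Ideal.span {(p : B)}) B) :
    IsAdicComplete (Ideal.span {(p : TruncatedWittVector p n B)})
      (TruncatedWittVector p n B) := by
  have hH : IsHausdorff (Ideal.span {(p : TruncatedWittVector p n B)})
      (TruncatedWittVector p n B) := by
    constructor
    intro x hx
    apply TruncatedWittVector.ext
    intro i
    rw [TruncatedWittVector.coeff_zero]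
    apply IsHausdorff.haus hB.toIsHausdorff (x.coeff i)
    intro k
    rw [smod_iff, sub_zero]
    have hx' : x - 0 ∈ Ideal.span {(p : TruncatedWittVector p n B)^(n*k)} :=
      (smod_iff x 0 (n*k)).mp (hx (n*k))
    have h1 := TL1 hn x 0 k hx' i
    rwa [TruncatedWittVector.coeff_zero, sub_zero] at h1
  have hP : IsPrecomplete (Ideal.span {(p : TruncatedWittVector p n B)})
      (TruncatedWittVector p n B) := by
    constructor
    intro f hf
    have key : ∀ i : Fin n, ∃ Li : B, ∀ k,
        TruncatedWittVector.coeff i (f (n*k)) ≡ Li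
          [SMOD ((Ideal.span {(p:B)})^k • ⊤ : Submodule B B)] := by
      intro i
      refine IsPrecomplete.prec hB.toIsPrecomplete ?_
      intro k l hkl
      rw [smod_iff]
      refine TL1 hn (f (n*k)) (f (n*l)) k ?_ i
      exact (smod_iff _ _ (n*k)).mp (hf (Nat.mul_le_mul_left n hkl))
    choose L hL using key
    refine ⟨TruncatedWittVector.mk p L, fun m => ?_⟩
    rw [smod_iff]
    have hsplit : f m - TruncatedWittVector.mk p L
        = (f m - f (n*(m+1))) + (f (n*(m+1)) - TruncatedWittVector.mk p L) := by ring
    rw [hsplit]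
    apply Ideal.add_mem
    · have hm1 : m + 1 ≤ n*(m+1) := Nat.le_mul_of_pos_left _ (lt_of_lt_of_le Nat.zero_lt_one hn)
      exact (smod_iff _ _ m).mp (hf (by omega))
    · apply TL2
      intro i
      rw [TruncatedWittVector.coeff_mk]
      exact (smod_iff _ _ (m+1)).mp (hL i (m+1))
  exact { toIsHausdorff := hH, toIsPrecomplete := hP }
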